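/- Let a, b, b' ∈ ℂ, c, c' ∈ ℂ \ ℤ_{≤0}, a − b ∉ ℤ, and fix x ∈ ℂ \ {0}. For any positive integer N, as y → 0 with |arg(−x/y)| < π, the Appell function satisfies F₂[a,b,b';c,c'; x/y, y] = f_c(b,a)(−x/y)^{−a} Σ_{m=0}^{N−1} c₁(m) y^m + f_c(a,b)(−x/y)^{−b} Σ_{m=0}^{N−1} c₂(m) y^m + O(|y|^{Re(a)+N} + |y|^{Re(b)+N}), where c₁(m) = Σ_{k+ℓ=m} (−k)_ℓ (b')_ℓ (a)_k (1−c+a)_k / ((c')_ℓ (1−b+a)_k ℓ! k!) x^{−k} and c₂(m) = Σ_{k+ℓ=m} (b')_ℓ (a−b−k)_ℓ (b)_k (1−c+b)_k / ((c')_ℓ (1−a+b)_k ℓ! k!) x^{−k}. -/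

import Mathlib

open Complex Filter Topology Asymptotics

/-- Pochhammer symbol (rising factorial) on `ℂ`. -/
noncomputable def poch (a : ℂ) (n : ℕ) : ℂ := (ascPochhammer ℂ n).eval a

/-- Gauss hypergeometric function `₂F₁[a, b; c; z]`. -/
noncomputable def F21 (a b c z : ℂ) : ℂ :=
  ∑' n : ℕ, poch a n * poch b n / (poch c n * (Nat.factorial n : ℂ)) * z ^ n

/-- `f_γ(a,b) := Γ(γ)Γ(a−b)/(Γ(a)Γ(γ−b))`. -/
noncomputable def fgam (γ a b : ℂ) : ℂ :=
  Complex.Gamma γ * Complex.Gamma (a - b) / (Complex.Gamma a * Complex.Gamma (γ - b))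

/-- The Appell function `F₂[a,b,b';c,c';x,y]` given by its analytic
continuation via Jaeger's formula, valid for `|y| < 1`, `|x| > |y| + 1`. -/
noncomputable def F2 (a b b' c c' x y : ℂ) : ℂ :=
  fgam c b a * (-x) ^ (-a) *
    (∑' n : ℕ, F21 (-(n : ℂ)) b' c' y *
      (poch a n * poch (1 - c + a) n /
        (poch (1 - b + a) n * (Nat.factorial n : ℂ))) * x⁻¹ ^ n)
  + fgam c a b * (-x) ^ (-b) *
    (∑' n : ℕ, F21 (a - b - n) b' c' y *
      (poch b n * poch (1 - c + b) n /
        (poch (1 - a + b) n * (Nat.factorial n : ℂ))) * x⁻¹ ^ n)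

/-- Coefficient `c₁(m)`. -/
noncomputable def coeffC1 (a b b' c c' x : ℂ) (m : ℕ) : ℂ :=
  ∑ k ∈ Finset.range (m + 1),
    poch (-(k : ℂ)) (m - k) * poch b' (m - k) * poch a k * poch (1 - c + a) k /
      (poch c' (m - k) * poch (1 - b + a) k *
        (Nat.factorial (m - k) : ℂ) * (Nat.factorial k : ℂ)) * x⁻¹ ^ k

/-- Coefficient `c₂(m)`. -/
noncomputable def coeffC2 (a b b' c c' x : ℂ) (m : ℕ) : ℂ :=
  ∑ k ∈ Finset.range (m + 1),
    poch b' (m - k) * poch (a - b - k) (m - k) * poch b k * poch (1 - c + b) k /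
      (poch c' (m - k) * poch (1 - a + b) k *
        (Nat.factorial (m - k) : ℂ) * (Nat.factorial k : ℂ)) * x⁻¹ ^ k

/-- auxiliary lemmas -/

lemma poch_zero (a : ℂ) : poch a 0 = 1 := by simp [poch]

lemma poch_succ (a : ℂ) (n : ℕ) : poch a (n + 1) = poch a n * (a + n) := by
  simp [poch, ascPochhammer_succ_right]

lemma norm_poch_le (a : ℂ) (n : ℕ) : ‖poch a n‖ ≤ (‖a‖ + n) ^ n := by
  induction n with
  | zero => simp [poch_zero]
  | succ n ih =>
    rw [poch_succ, norm_mul]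
    have h1 : ‖a + (n : ℂ)‖ ≤ ‖a‖ + n := by
      simpa using norm_add_le a (n : ℂ)
    calc ‖poch a n‖ * ‖a + (n : ℂ)‖ ≤ (‖a‖ + n) ^ n * (‖a‖ + n) := by
          apply mul_le_mul ih h1 (norm_nonneg _)
          positivity
      _ = (‖a‖ + n) ^ (n + 1) := (pow_succ _ _).symm
      _ ≤ (‖a‖ + (n + 1 : ℕ)) ^ (n + 1) := by
          apply pow_le_pow_left₀ (by positivity)
          push_cast; linarith

lemma poch_ne_zero {a : ℂ} (h : ∀ k : ℕ, a + k ≠ 0) (n : ℕ) : poch a n ≠ 0 := by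
  induction n with
  | zero => simp [poch_zero]
  | succ n ih => rw [poch_succ]; exact mul_ne_zero ih (h n)

lemma exists_lb {c : ℂ} (h : ∀ k : ℕ, c + k ≠ 0) : ∃ δ : ℝ, 0 < δ ∧ ∀ k : ℕ, δ ≤ ‖c + k‖ := by
  set n₀ : ℕ := ⌈‖c‖⌉₊ + 1 with hn₀
  have hne : (Finset.range n₀).Nonempty := ⟨0, by simp [hn₀]⟩
  set δ₀ : ℝ := (Finset.range n₀).inf' hne (fun k => ‖c + k‖) with hδ₀
  refine ⟨min 1 δ₀, ?_, ?_⟩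
  · apply lt_min one_pos
    rw [hδ₀, Finset.lt_inf'_iff]
    intro k _
    exact norm_pos_iff.mpr (h k)
  · intro k
    rcases lt_or_ge k n₀ with hk | hk
    · exact le_trans (min_le_right _ _)
        (Finset.inf'_le _ (Finset.mem_range.mpr hk))
    · refine le_trans (min_le_left _ _) ?_
      have h1 : ‖c‖ + 1 ≤ (k : ℝ) := by
        have : (n₀ : ℝ) ≤ k := by exact_mod_cast hk
        have h2 : ‖c‖ ≤ (⌈‖c‖⌉₊ : ℝ) := Nat.le_ceil _
        rw [hn₀] at this; push_cast at this; linarith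
      have h2 : ‖(k : ℂ)‖ ≤ ‖c + k‖ + ‖c‖ := by
        calc ‖(k : ℂ)‖ = ‖c + k - c‖ := by ring_nf
          _ ≤ ‖c + k‖ + ‖c‖ := norm_sub_le _ _
      have h3 : ‖(k : ℂ)‖ = (k : ℝ) := by simp
      linarith

lemma exists_ratio_bound (b : ℂ) {c : ℂ} (h : ∀ k : ℕ, c + k ≠ 0) :
    ∃ M : ℝ, 1 ≤ M ∧ ∀ n : ℕ, ‖poch b n‖ ≤ M ^ n * ‖poch c n‖ := by
  obtain ⟨δ, hδ, hlb⟩ := exists_lb h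
  refine ⟨1 + ‖b - c‖ / δ, le_add_of_nonneg_right (by positivity), ?_⟩
  set M : ℝ := 1 + ‖b - c‖ / δ with hM
  have hM1 : (1 : ℝ) ≤ M := le_add_of_nonneg_right (by positivity)
  intro n
  induction n with
  | zero => simp [poch_zero]
  | succ n ih =>
    rw [poch_succ, poch_succ, norm_mul, norm_mul]
    have key : ‖b + n‖ ≤ M * ‖c + n‖ := by
      have h1 : ‖b + (n : ℂ)‖ ≤ ‖c + n‖ + ‖b - c‖ := by
        calc ‖b + (n : ℂ)‖ = ‖c + n + (b - c)‖ := by ring_nf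
          _ ≤ ‖c + n‖ + ‖b - c‖ := norm_add_le _ _
      have h2 : ‖b - c‖ ≤ ‖b - c‖ / δ * ‖c + n‖ := by
        rw [div_mul_eq_mul_div, le_div_iff₀ hδ]
        exact mul_le_mul_of_nonneg_left (hlb n) (norm_nonneg _)
      rw [hM]; nlinarith [norm_nonneg (c + (n : ℂ))]
    calc ‖poch b n‖ * ‖b + n‖ ≤ (M ^ n * ‖poch c n‖) * (M * ‖c + n‖) := by
          apply mul_le_mul ih key (norm_nonneg _)
          positivity
      _ = M ^ (n + 1) * (‖poch c n‖ * ‖c + n‖) := by ring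

lemma pow_le_fact_mul_exp {s : ℝ} (hs : 0 ≤ s) (n : ℕ) :
    s ^ n ≤ (n.factorial : ℝ) * Real.exp s := by
  have h1 : s ^ n / (n.factorial : ℝ) ≤ Real.exp s := by
    have := Real.sum_le_exp_of_nonneg hs (n + 1)
    refine le_trans ?_ this
    refine Finset.single_le_sum (f := fun i => s ^ i / (i.factorial : ℝ)) ?_ ?_
    · intro i _; positivity
    · simp
  rw [div_le_iff₀ (by positivity)] at h1
  linarith

lemma norm_poch_le_exp {w : ℂ} {s : ℝ} (hws : ‖w‖ ≤ s) (n : ℕ) :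
    ‖poch w n‖ ≤ (n.factorial : ℝ) * (Real.exp s * Real.exp 1 ^ n) := by
  have h0 : (0:ℝ) ≤ s := le_trans (norm_nonneg _) hws
  calc ‖poch w n‖ ≤ (‖w‖ + n) ^ n := norm_poch_le _ _
    _ ≤ (s + n) ^ n := by
        apply pow_le_pow_left₀ (by positivity)
        linarith
    _ ≤ (n.factorial : ℝ) * Real.exp (s + n) := pow_le_fact_mul_exp (by positivity) n
    _ = (n.factorial : ℝ) * (Real.exp s * Real.exp 1 ^ n) := by
        rw [Real.exp_add]
        congr 1
        rw [← Real.exp_one_pow]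

set_option maxHeartbeats 1000000 in
lemma key_bound (u : ℕ → ℕ → ℂ) (C K : ℝ) (hC : 0 ≤ C) (hK : 0 < K)
    (hu : ∀ k ℓ : ℕ, ‖u k ℓ‖ ≤ C * K ^ (k + ℓ)) (N : ℕ) (y : ℂ)
    (hy : ‖y‖ ≤ 1 / (2 * K)) :
    ‖(∑' k : ℕ, ∑' ℓ : ℕ, u k ℓ * y ^ (k + ℓ)) -
        ∑ m ∈ Finset.range N, (∑ k ∈ Finset.range (m + 1), u k (m - k)) * y ^ m‖
      ≤ C * (2 * K) ^ N * 4 * ‖y‖ ^ N := by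
  set T : ℕ × ℕ → ℂ := fun p => u p.1 p.2 * y ^ (p.1 + p.2) with hT_def
  set r : ℝ := K * ‖y‖ with hr_def
  have hr0 : 0 ≤ r := by positivity
  have hr : r ≤ 1 / 2 := by
    rw [hr_def]
    calc K * ‖y‖ ≤ K * (1 / (2 * K)) := by
          apply mul_le_mul_of_nonneg_left hy hK.le
      _ = 1 / 2 := by field_simp
  have hr1 : r < 1 := lt_of_le_of_lt hr (by norm_num)
  have hTb : ∀ p : ℕ × ℕ, ‖T p‖ ≤ (C * r ^ p.1) * r ^ p.2 := by
    intro ⟨k, l⟩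
    have : ‖T (k, l)‖ = ‖u k l‖ * ‖y‖ ^ (k + l) := by
      rw [hT_def]; simp [norm_mul]
    rw [this]
    calc ‖u k l‖ * ‖y‖ ^ (k + l) ≤ (C * K ^ (k + l)) * ‖y‖ ^ (k + l) := by
          apply mul_le_mul_of_nonneg_right (hu k l) (by positivity)
      _ = (C * r ^ k) * r ^ l := by rw [hr_def]; rw [mul_pow, pow_add]; ring
  have hmaj : Summable fun p : ℕ × ℕ => (C * r ^ p.1) * r ^ p.2 :=
    Summable.mul_of_nonneg ((summable_geometric_of_lt_one hr0 hr1).mul_left C)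
      (summable_geometric_of_lt_one hr0 hr1) (fun n => by positivity) (fun n => by positivity)
  have hT : Summable T := Summable.of_norm_bounded hmaj hTb
  have hTnorm : Summable fun p : ℕ × ℕ => ‖T p‖ :=
    Summable.of_nonneg_of_le (fun _ => norm_nonneg _) hTb hmaj
  have EQ1 : (∑' k : ℕ, ∑' ℓ : ℕ, u k ℓ * y ^ (k + ℓ)) = ∑' p : ℕ × ℕ, T p :=
    (hT.tsum_prod' (fun k => hT.prod_factor k)).symm
  set S : Finset (ℕ × ℕ) := (Finset.range N).biUnion (fun m => Finset.HasAntidiagonal.antidiagonal m) with hS_def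
  have hS : ∀ p : ℕ × ℕ, p ∈ S ↔ p.1 + p.2 < N := by
    intro p
    simp only [hS_def, Finset.mem_biUnion, Finset.mem_range, Finset.HasAntidiagonal.mem_antidiagonal]
    constructor
    · rintro ⟨m, hm, hpm⟩; omega
    · intro h; exact ⟨p.1 + p.2, h, rfl⟩
  have EQ2 : ∑ m ∈ Finset.range N, (∑ k ∈ Finset.range (m + 1), u k (m - k)) * y ^ m
      = ∑ p ∈ S, T p := by
    rw [hS_def, Finset.sum_biUnion]
    · apply Finset.sum_congr rfl
      intro m _
      rw [Finset.Nat.sum_antidiagonal_eq_sum_range_succ_mk, Finset.sum_mul]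
      apply Finset.sum_congr rfl
      intro k hk
      have hkm : k + (m - k) = m :=
        Nat.add_sub_cancel' (Nat.lt_succ_iff.mp (Finset.mem_range.mp hk))
      simp only [hT_def, hkm]
    · intro i _ j _ hij
      simp only [Function.onFun]
      rw [Finset.disjoint_left]
      intro p hpi hpj
      rw [Finset.HasAntidiagonal.mem_antidiagonal] at hpi hpj
      exact hij (hpi ▸ hpj)
  have EQ3 : (∑' p : ℕ × ℕ, T p) - ∑ p ∈ S, T p
      = ∑' p : ↑((↑S : Set (ℕ × ℕ))ᶜ), T p := by
    have h := Summable.sum_add_tsum_compl (s := S) hT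
    rw [← h]; ring
  set A : ℝ := C * (2 * K) ^ N * ‖y‖ ^ N with hA_def
  have hA0 : 0 ≤ A := by positivity
  set g : ℕ × ℕ → ℝ := fun p => (A * (1 / 2) ^ p.1) * (1 / 2) ^ p.2 with hg_def
  have hg : Summable g :=
    Summable.mul_of_nonneg ((summable_geometric_of_lt_one (by norm_num) (by norm_num)).mul_left A)
      (summable_geometric_of_lt_one (by norm_num) (by norm_num))
      (fun n => by positivity) (fun n => by positivity)
  have hTg : ∀ p : ℕ × ℕ, N ≤ p.1 + p.2 → ‖T p‖ ≤ g p := by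
    intro ⟨k, l⟩ hp
    simp only at hp
    have hd : k + l = N + (k + l - N) := (Nat.add_sub_cancel' hp).symm
    set d : ℕ := k + l - N with hd_def
    calc ‖T (k, l)‖ ≤ (C * r ^ k) * r ^ l := hTb (k, l)
      _ = C * r ^ (k + l) := by rw [pow_add]; ring
      _ = C * (r ^ N * r ^ d) := by rw [← pow_add, ← hd]
      _ ≤ C * ((K ^ N * ‖y‖ ^ N) * (1 / 2) ^ d) := by
          apply mul_le_mul_of_nonneg_left _ hC
          rw [hr_def, mul_pow]
          exact mul_le_mul_of_nonneg_left (pow_le_pow_left₀ hr0 hr d) (by positivity)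
      _ = g (k, l) := by
          have h2 : ((1 : ℝ) / 2) ^ d = 2 ^ N * ((1 / 2) ^ k * (1 / 2) ^ l) := by
            rw [← pow_add, hd, pow_add, one_div, inv_pow, inv_pow]
            field_simp
          rw [hg_def]
          simp only
          rw [h2, hA_def, mul_pow]
          ring
  have step1 : ‖∑' p : ↑((↑S : Set (ℕ × ℕ))ᶜ), T p‖
      ≤ ∑' p : ↑((↑S : Set (ℕ × ℕ))ᶜ), ‖T ↑p‖ :=
    norm_tsum_le_tsum_norm (hTnorm.subtype _)
  have step2 : (∑' p : ↑((↑S : Set (ℕ × ℕ))ᶜ), ‖T ↑p‖)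
      ≤ ∑' p : ↑((↑S : Set (ℕ × ℕ))ᶜ), g ↑p := by
    apply Summable.tsum_le_tsum _ (hTnorm.subtype _) (hg.subtype _)
    intro p
    apply hTg
    have hp := p.2
    simp only [Set.mem_compl_iff, Finset.mem_coe] at hp
    rw [hS p.1] at hp
    omega
  have step3 : (∑' p : ↑((↑S : Set (ℕ × ℕ))ᶜ), g ↑p) ≤ ∑' p : ℕ × ℕ, g p := by
    rw [tsum_subtype]
    apply Summable.tsum_le_tsum _ (hg.indicator _) hg
    intro p
    exact Set.indicator_le_self' (fun q _ => by positivity) p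
  have step4 : (∑' p : ℕ × ℕ, g p) = A * 4 := by
    rw [hg.tsum_prod' (fun k => hg.prod_factor k)]
    have hgeo : (∑' n : ℕ, ((1 : ℝ) / 2) ^ n) = 2 := by
      rw [tsum_geometric_of_lt_one (by norm_num) (by norm_num)]; norm_num
    calc (∑' k : ℕ, ∑' l : ℕ, g (k, l))
        = ∑' k : ℕ, (A * (1 / 2) ^ k) * ∑' l : ℕ, ((1 : ℝ) / 2) ^ l := by
          apply tsum_congr; intro k; simp only [hg_def]; rw [tsum_mul_left]
      _ = ∑' k : ℕ, (A * 2) * (1 / 2) ^ k := by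
          apply tsum_congr; intro k; rw [hgeo]; ring
      _ = (A * 2) * ∑' k : ℕ, ((1 : ℝ) / 2) ^ k := tsum_mul_left
      _ = A * 4 := by rw [hgeo]; ring
  rw [EQ1, EQ2, EQ3]
  calc ‖∑' p : ↑((↑S : Set (ℕ × ℕ))ᶜ), T p‖ ≤ ∑' p : ℕ × ℕ, g p :=
        le_trans step1 (le_trans step2 step3)
    _ = A * 4 := step4
    _ = C * (2 * K) ^ N * 4 * ‖y‖ ^ N := by rw [hA_def]; ring

lemma series1_eq (a b b' c c' x y : ℂ) :
    (∑' n : ℕ, F21 (-(n : ℂ)) b' c' y *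
      (poch a n * poch (1 - c + a) n /
        (poch (1 - b + a) n * (Nat.factorial n : ℂ))) * (x / y)⁻¹ ^ n)
    = ∑' k : ℕ, ∑' ℓ : ℕ,
        (poch (-(k : ℂ)) ℓ * poch b' ℓ * poch a k * poch (1 - c + a) k /
          (poch c' ℓ * poch (1 - b + a) k *
            (Nat.factorial ℓ : ℂ) * (Nat.factorial k : ℂ)) * x⁻¹ ^ k) * y ^ (k + ℓ) := by
  apply tsum_congr; intro k
  rw [F21, ← tsum_mul_right, ← tsum_mul_right]
  apply tsum_congr; intro l
  have hinv : (x / y)⁻¹ = y * x⁻¹ := by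
    rw [div_eq_mul_inv, mul_inv_rev, inv_inv]
  rw [hinv, mul_pow, pow_add]
  ring

lemma series2_eq (a b b' c c' x y : ℂ) :
    (∑' n : ℕ, F21 (a - b - n) b' c' y *
      (poch b n * poch (1 - c + b) n /
        (poch (1 - a + b) n * (Nat.factorial n : ℂ))) * (x / y)⁻¹ ^ n)
    = ∑' k : ℕ, ∑' ℓ : ℕ,
        (poch b' ℓ * poch (a - b - k) ℓ * poch b k * poch (1 - c + b) k /
          (poch c' ℓ * poch (1 - a + b) k *
            (Nat.factorial ℓ : ℂ) * (Nat.factorial k : ℂ)) * x⁻¹ ^ k) * y ^ (k + ℓ) := by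
  apply tsum_congr; intro k
  rw [F21, ← tsum_mul_right, ← tsum_mul_right]
  apply tsum_congr; intro l
  have hinv : (x / y)⁻¹ = y * x⁻¹ := by
    rw [div_eq_mul_inv, mul_inv_rev, inv_inv]
  rw [hinv, mul_pow, pow_add]
  ring

lemma exp_nat_eq (k : ℕ) : Real.exp (k : ℝ) = Real.exp 1 ^ k := (Real.exp_one_pow k).symm

lemma u1_bound (a b b' c c' x : ℂ)
    (hc' : ∀ k : ℕ, c' + k ≠ 0) (hba : ∀ k : ℕ, (1 - b + a) + k ≠ 0) :
    ∃ C K : ℝ, 0 ≤ C ∧ 0 < K ∧ ∀ k ℓ : ℕ,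
      ‖poch (-(k : ℂ)) ℓ * poch b' ℓ * poch a k * poch (1 - c + a) k /
          (poch c' ℓ * poch (1 - b + a) k *
            (Nat.factorial ℓ : ℂ) * (Nat.factorial k : ℂ)) * x⁻¹ ^ k‖
        ≤ C * K ^ (k + ℓ) := by
  obtain ⟨M₁, hM₁, hrat₁⟩ := exists_ratio_bound b' hc'
  obtain ⟨M₂, hM₂, hrat₂⟩ := exists_ratio_bound a hba
  set E : ℝ := Real.exp 1 with hE_def
  have hE : 0 < E := Real.exp_pos 1
  set C : ℝ := Real.exp ‖1 - c + a‖ with hC_def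
  have hC : 0 ≤ C := (Real.exp_pos _).le
  set K : ℝ := max (E * M₁) (E * E * M₂ * (‖x⁻¹‖ + 1)) with hK_def
  have hK : 0 < K := lt_max_of_lt_left (by positivity)
  refine ⟨C, K, hC, hK, ?_⟩
  intro k l
  have hQ1 : poch c' l ≠ 0 := poch_ne_zero hc' l
  have hQ2 : poch (1 - b + a) k ≠ 0 := poch_ne_zero hba k
  have hden : (0:ℝ) < ‖poch c' l‖ * ‖poch (1 - b + a) k‖ *
      (Nat.factorial l : ℝ) * (Nat.factorial k : ℝ) := by
    have := Nat.factorial_pos l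
    have := Nat.factorial_pos k
    have h1 : (0:ℝ) < ‖poch c' l‖ := norm_pos_iff.mpr hQ1
    have h2 : (0:ℝ) < ‖poch (1 - b + a) k‖ := norm_pos_iff.mpr hQ2
    positivity
  have hnorm : ‖poch (-(k : ℂ)) l * poch b' l * poch a k * poch (1 - c + a) k /
      (poch c' l * poch (1 - b + a) k *
        (Nat.factorial l : ℂ) * (Nat.factorial k : ℂ)) * x⁻¹ ^ k‖
      = ‖poch (-(k : ℂ)) l‖ * ‖poch b' l‖ * ‖poch a k‖ * ‖poch (1 - c + a) k‖ /
        (‖poch c' l‖ * ‖poch (1 - b + a) k‖ *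
          (Nat.factorial l : ℝ) * (Nat.factorial k : ℝ)) * ‖x⁻¹‖ ^ k := by
    rw [norm_mul, norm_div, norm_pow]
    congr 2
    · rw [norm_mul, norm_mul, norm_mul]
    · rw [norm_mul, norm_mul, norm_mul]
      simp [Complex.norm_natCast]
  rw [hnorm, div_mul_eq_mul_div, div_le_iff₀ hden]
  have b1 : ‖poch (-(k : ℂ)) l‖ ≤ (Nat.factorial l : ℝ) * (E ^ k * E ^ l) := by
    have := norm_poch_le_exp (w := -(k : ℂ)) (s := (k : ℝ)) (by simp) l
    rwa [exp_nat_eq, ← hE_def] at this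
  have b2 : ‖poch b' l‖ ≤ M₁ ^ l * ‖poch c' l‖ := hrat₁ l
  have b3 : ‖poch a k‖ ≤ M₂ ^ k * ‖poch (1 - b + a) k‖ := hrat₂ k
  have b4 : ‖poch (1 - c + a) k‖ ≤ (Nat.factorial k : ℝ) * (C * E ^ k) := by
    have := norm_poch_le_exp (w := 1 - c + a) (s := ‖1 - c + a‖) le_rfl k
    rwa [← hC_def, ← hE_def] at this
  calc ‖poch (-(k : ℂ)) l‖ * ‖poch b' l‖ * ‖poch a k‖ * ‖poch (1 - c + a) k‖ * ‖x⁻¹‖ ^ k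
      ≤ ((Nat.factorial l : ℝ) * (E ^ k * E ^ l)) * (M₁ ^ l * ‖poch c' l‖) *
        (M₂ ^ k * ‖poch (1 - b + a) k‖) * ((Nat.factorial k : ℝ) * (C * E ^ k)) * ‖x⁻¹‖ ^ k := by
        gcongr <;> positivity
    _ = (C * ((E * M₁) ^ l * (E * E * M₂ * ‖x⁻¹‖) ^ k)) *
        (‖poch c' l‖ * ‖poch (1 - b + a) k‖ *
          (Nat.factorial l : ℝ) * (Nat.factorial k : ℝ)) := by
        rw [mul_pow, mul_pow, mul_pow, mul_pow]
        ring
    _ ≤ (C * (K ^ l * K ^ k)) *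
        (‖poch c' l‖ * ‖poch (1 - b + a) k‖ *
          (Nat.factorial l : ℝ) * (Nat.factorial k : ℝ)) := by
        have g1 : (E * M₁) ^ l ≤ K ^ l := by
          apply pow_le_pow_left₀ (by positivity) (le_max_left _ _)
        have g2 : (E * E * M₂ * ‖x⁻¹‖) ^ k ≤ K ^ k := by
          apply pow_le_pow_left₀ (by positivity)
          refine le_trans ?_ (le_max_right _ _)
          have : ‖x⁻¹‖ ≤ ‖x⁻¹‖ + 1 := by linarith
          have h0 : (0:ℝ) ≤ E * E * M₂ := by positivity
          nlinarith
        have := hden.le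
        gcongr
    _ = C * K ^ (k + l) *
        (‖poch c' l‖ * ‖poch (1 - b + a) k‖ *
          (Nat.factorial l : ℝ) * (Nat.factorial k : ℝ)) := by
        rw [pow_add]; ring

lemma u2_bound (a b b' c c' x : ℂ)
    (hc' : ∀ k : ℕ, c' + k ≠ 0) (hba : ∀ k : ℕ, (1 - a + b) + k ≠ 0) :
    ∃ C K : ℝ, 0 ≤ C ∧ 0 < K ∧ ∀ k ℓ : ℕ,
      ‖poch b' ℓ * poch (a - b - k) ℓ * poch b k * poch (1 - c + b) k /
          (poch c' ℓ * poch (1 - a + b) k *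
            (Nat.factorial ℓ : ℂ) * (Nat.factorial k : ℂ)) * x⁻¹ ^ k‖
        ≤ C * K ^ (k + ℓ) := by
  obtain ⟨M₁, hM₁, hrat₁⟩ := exists_ratio_bound b' hc'
  obtain ⟨M₂, hM₂, hrat₂⟩ := exists_ratio_bound b hba
  set E : ℝ := Real.exp 1 with hE_def
  have hE : 0 < E := Real.exp_pos 1
  set C : ℝ := Real.exp ‖a - b‖ * Real.exp ‖1 - c + b‖ with hC_def
  have hC : 0 ≤ C := by positivity
  set K : ℝ := max (E * M₁) (E * E * M₂ * (‖x⁻¹‖ + 1)) with hK_def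
  have hK : 0 < K := lt_max_of_lt_left (by positivity)
  refine ⟨C, K, hC, hK, ?_⟩
  intro k l
  have hQ1 : poch c' l ≠ 0 := poch_ne_zero hc' l
  have hQ2 : poch (1 - a + b) k ≠ 0 := poch_ne_zero hba k
  have hden : (0:ℝ) < ‖poch c' l‖ * ‖poch (1 - a + b) k‖ *
      (Nat.factorial l : ℝ) * (Nat.factorial k : ℝ) := by
    have := Nat.factorial_pos l
    have := Nat.factorial_pos k
    have h1 : (0:ℝ) < ‖poch c' l‖ := norm_pos_iff.mpr hQ1
    have h2 : (0:ℝ) < ‖poch (1 - a + b) k‖ := norm_pos_iff.mpr hQ2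
    positivity
  have hnorm : ‖poch b' l * poch (a - b - k) l * poch b k * poch (1 - c + b) k /
      (poch c' l * poch (1 - a + b) k *
        (Nat.factorial l : ℂ) * (Nat.factorial k : ℂ)) * x⁻¹ ^ k‖
      = ‖poch b' l‖ * ‖poch (a - b - k) l‖ * ‖poch b k‖ * ‖poch (1 - c + b) k‖ /
        (‖poch c' l‖ * ‖poch (1 - a + b) k‖ *
          (Nat.factorial l : ℝ) * (Nat.factorial k : ℝ)) * ‖x⁻¹‖ ^ k := by
    rw [norm_mul, norm_div, norm_pow]
    congr 2
    · rw [norm_mul, norm_mul, norm_mul]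
    · rw [norm_mul, norm_mul, norm_mul]
      simp [Complex.norm_natCast]
  rw [hnorm, div_mul_eq_mul_div, div_le_iff₀ hden]
  have b1 : ‖poch b' l‖ ≤ M₁ ^ l * ‖poch c' l‖ := hrat₁ l
  have b2 : ‖poch (a - b - k) l‖
      ≤ (Nat.factorial l : ℝ) * ((Real.exp ‖a - b‖ * E ^ k) * E ^ l) := by
    have hws : ‖a - b - (k : ℂ)‖ ≤ ‖a - b‖ + (k : ℝ) := by
      calc ‖a - b - (k : ℂ)‖ ≤ ‖a - b‖ + ‖(k : ℂ)‖ := norm_sub_le _ _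
        _ = ‖a - b‖ + (k : ℝ) := by simp
    have := norm_poch_le_exp (w := a - b - k) (s := ‖a - b‖ + (k : ℝ)) hws l
    rwa [Real.exp_add, exp_nat_eq, ← hE_def] at this
  have b3 : ‖poch b k‖ ≤ M₂ ^ k * ‖poch (1 - a + b) k‖ := hrat₂ k
  have b4 : ‖poch (1 - c + b) k‖ ≤ (Nat.factorial k : ℝ) * (Real.exp ‖1 - c + b‖ * E ^ k) := by
    have := norm_poch_le_exp (w := 1 - c + b) (s := ‖1 - c + b‖) le_rfl k
    rwa [← hE_def] at this
  calc ‖poch b' l‖ * ‖poch (a - b - k) l‖ * ‖poch b k‖ * ‖poch (1 - c + b) k‖ * ‖x⁻¹‖ ^ k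
      ≤ (M₁ ^ l * ‖poch c' l‖) *
        ((Nat.factorial l : ℝ) * ((Real.exp ‖a - b‖ * E ^ k) * E ^ l)) *
        (M₂ ^ k * ‖poch (1 - a + b) k‖) *
        ((Nat.factorial k : ℝ) * (Real.exp ‖1 - c + b‖ * E ^ k)) * ‖x⁻¹‖ ^ k := by
        gcongr <;> positivity
    _ = (C * ((E * M₁) ^ l * (E * E * M₂ * ‖x⁻¹‖) ^ k)) *
        (‖poch c' l‖ * ‖poch (1 - a + b) k‖ *
          (Nat.factorial l : ℝ) * (Nat.factorial k : ℝ)) := by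
        rw [hC_def, mul_pow, mul_pow, mul_pow, mul_pow]
        ring
    _ ≤ (C * (K ^ l * K ^ k)) *
        (‖poch c' l‖ * ‖poch (1 - a + b) k‖ *
          (Nat.factorial l : ℝ) * (Nat.factorial k : ℝ)) := by
        have g1 : (E * M₁) ^ l ≤ K ^ l := by
          apply pow_le_pow_left₀ (by positivity) (le_max_left _ _)
        have g2 : (E * E * M₂ * ‖x⁻¹‖) ^ k ≤ K ^ k := by
          apply pow_le_pow_left₀ (by positivity)
          refine le_trans ?_ (le_max_right _ _)
          have h0 : (0:ℝ) ≤ E * E * M₂ := by positivity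
          nlinarith
        gcongr
    _ = C * K ^ (k + l) *
        (‖poch c' l‖ * ‖poch (1 - a + b) k‖ *
          (Nat.factorial l : ℝ) * (Nat.factorial k : ℝ)) := by
        rw [pow_add]; ring

lemma cpow_factor_bound {z : ℂ} (hz : z ≠ 0) (w : ℂ) :
    ‖z ^ (-w)‖ ≤ ‖z‖ ^ (-w.re) * Real.exp (Real.pi * |w.im|) := by
  rw [Complex.norm_cpow_of_ne_zero hz, Complex.neg_re, Complex.neg_im]
  rw [div_le_iff₀ (Real.exp_pos _)]
  rw [mul_assoc, ← Real.exp_add]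
  have ht : 0 ≤ Real.pi * |w.im| + Complex.arg z * -w.im := by
    have h1 : |Complex.arg z * -w.im| ≤ Real.pi * |w.im| := by
      rw [abs_mul, abs_neg]
      exact mul_le_mul_of_nonneg_right (Complex.abs_arg_le_pi z) (abs_nonneg _)
    have h2 := neg_abs_le (Complex.arg z * -w.im)
    linarith
  calc ‖z‖ ^ (-w.re) = ‖z‖ ^ (-w.re) * 1 := (mul_one _).symm
    _ ≤ ‖z‖ ^ (-w.re) * Real.exp (Real.pi * |w.im| + Complex.arg z * -w.im) := by
        gcongr
        exact Real.one_le_exp ht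

set_option maxHeartbeats 1000000 in
/-- Asymptotics of the Appell function `F₂[x/y, y]` as `y → 0` with
`|arg(−x/y)| < π`. -/
theorem F2_small_y_asymptotics (a b b' c c' x : ℂ)
    (hc : ∀ n : ℕ, c ≠ -n) (hc' : ∀ n : ℕ, c' ≠ -n)
    (hab : ∀ n : ℤ, a - b ≠ n) (hx : x ≠ 0) (N : ℕ) (hN : 0 < N) :
    (fun y : ℂ =>
        F2 a b b' c c' (x / y) y -
          (fgam c b a * (-(x / y)) ^ (-a) *
              ∑ m ∈ Finset.range N, coeffC1 a b b' c c' x m * y ^ m +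
            fgam c a b * (-(x / y)) ^ (-b) *
              ∑ m ∈ Finset.range N, coeffC2 a b b' c c' x m * y ^ m))
      =O[nhdsWithin (0 : ℂ)
          {y : ℂ | ¬((-(x / y)).im = 0 ∧ (-(x / y)).re ≤ 0)}]
      fun y : ℂ => ‖y‖ ^ (a.re + N) + ‖y‖ ^ (b.re + N) := by
  have hc'2 : ∀ k : ℕ, c' + k ≠ 0 := by
    intro k h
    exact hc' k (by linear_combination h)
  have hba1 : ∀ k : ℕ, (1 - b + a) + k ≠ 0 := by
    intro k h
    exact hab (-(k + 1)) (by push_cast; linear_combination h)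
  have hba2 : ∀ k : ℕ, (1 - a + b) + k ≠ 0 := by
    intro k h
    exact hab (k + 1) (by push_cast; linear_combination -h)
  obtain ⟨C₁, K₁, hC₁, hK₁, hu₁⟩ := u1_bound a b b' c c' x hc'2 hba1
  obtain ⟨C₂, K₂, hC₂, hK₂, hu₂⟩ := u2_bound a b b' c c' x hc'2 hba2
  set ρ : ℝ := min (1 / (2 * K₁)) (1 / (2 * K₂)) with hρ_def
  have hρ0 : 0 < ρ := lt_min (by positivity) (by positivity)
  set D₁ : ℝ := ‖fgam c b a‖ * ((‖x‖ ^ (-a.re) * Real.exp (Real.pi * |a.im|))) *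
      (C₁ * (2 * K₁) ^ N * 4) with hD₁_def
  set D₂ : ℝ := ‖fgam c a b‖ * ((‖x‖ ^ (-b.re) * Real.exp (Real.pi * |b.im|))) *
      (C₂ * (2 * K₂) ^ N * 4) with hD₂_def
  have hD₁0 : 0 ≤ D₁ := by positivity
  have hD₂0 : 0 ≤ D₂ := by positivity
  rw [Asymptotics.isBigO_iff]
  refine ⟨max D₁ D₂, ?_⟩
  have hball : ∀ᶠ y : ℂ in nhdsWithin 0
      {y : ℂ | ¬((-(x / y)).im = 0 ∧ (-(x / y)).re ≤ 0)}, ‖y‖ ≤ ρ := by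
    apply Filter.Eventually.filter_mono nhdsWithin_le_nhds
    filter_upwards [Metric.closedBall_mem_nhds (0 : ℂ) hρ0] with y hy
    simpa [dist_zero_right] using hy
  filter_upwards [hball, eventually_mem_nhdsWithin] with y hyρ hymem
  -- hymem already in propositional form
  have hz1 : -(x / y) ≠ 0 := by
    intro h
    exact hymem (by rw [h]; simp)
  have hy0 : y ≠ 0 := by
    intro h
    exact hz1 (by rw [h, div_zero, neg_zero])
  have hyn : 0 < ‖y‖ := norm_pos_iff.mpr hy0
  have key1 : ‖(∑' n : ℕ, F21 (-(n : ℂ)) b' c' y *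
      (poch a n * poch (1 - c + a) n /
        (poch (1 - b + a) n * (Nat.factorial n : ℂ))) * (x / y)⁻¹ ^ n) -
      ∑ m ∈ Finset.range N, coeffC1 a b b' c c' x m * y ^ m‖
      ≤ C₁ * (2 * K₁) ^ N * 4 * ‖y‖ ^ N := by
    rw [series1_eq a b b' c c' x y]
    exact key_bound _ C₁ K₁ hC₁ hK₁ hu₁ N y (le_trans hyρ (min_le_left _ _))
  have key2 : ‖(∑' n : ℕ, F21 (a - b - n) b' c' y *
      (poch b n * poch (1 - c + b) n /
        (poch (1 - a + b) n * (Nat.factorial n : ℂ))) * (x / y)⁻¹ ^ n) -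
      ∑ m ∈ Finset.range N, coeffC2 a b b' c c' x m * y ^ m‖
      ≤ C₂ * (2 * K₂) ^ N * 4 * ‖y‖ ^ N := by
    rw [series2_eq a b b' c c' x y]
    exact key_bound _ C₂ K₂ hC₂ hK₂ hu₂ N y (le_trans hyρ (min_le_right _ _))
  have habs : ‖-(x / y)‖ = ‖x‖ / ‖y‖ := by
    rw [norm_neg, norm_div]
  have hsplit : ∀ t : ℝ, (‖x‖ / ‖y‖) ^ (-t) = ‖x‖ ^ (-t) * ‖y‖ ^ t := by
    intro t
    rw [Real.div_rpow (norm_nonneg x) (norm_nonneg y), Real.rpow_neg (norm_nonneg y) t,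
      div_eq_mul_inv, inv_inv]
  have hcpow1 : ‖(-(x / y)) ^ (-a)‖
      ≤ (‖x‖ ^ (-a.re) * Real.exp (Real.pi * |a.im|)) * ‖y‖ ^ a.re := by
    have h1 := cpow_factor_bound hz1 a
    rw [habs, hsplit a.re] at h1
    exact h1.trans_eq (by ring)
  have hcpow2 : ‖(-(x / y)) ^ (-b)‖
      ≤ (‖x‖ ^ (-b.re) * Real.exp (Real.pi * |b.im|)) * ‖y‖ ^ b.re := by
    have h1 := cpow_factor_bound hz1 b
    rw [habs, hsplit b.re] at h1
    exact h1.trans_eq (by ring)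
  have hmain : F2 a b b' c c' (x / y) y -
      (fgam c b a * (-(x / y)) ^ (-a) *
          ∑ m ∈ Finset.range N, coeffC1 a b b' c c' x m * y ^ m +
        fgam c a b * (-(x / y)) ^ (-b) *
          ∑ m ∈ Finset.range N, coeffC2 a b b' c c' x m * y ^ m)
      = fgam c b a * (-(x / y)) ^ (-a) *
          ((∑' n : ℕ, F21 (-(n : ℂ)) b' c' y *
            (poch a n * poch (1 - c + a) n /
              (poch (1 - b + a) n * (Nat.factorial n : ℂ))) * (x / y)⁻¹ ^ n) -
            ∑ m ∈ Finset.range N, coeffC1 a b b' c c' x m * y ^ m)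
      + fgam c a b * (-(x / y)) ^ (-b) *
          ((∑' n : ℕ, F21 (a - b - n) b' c' y *
            (poch b n * poch (1 - c + b) n /
              (poch (1 - a + b) n * (Nat.factorial n : ℂ))) * (x / y)⁻¹ ^ n) -
            ∑ m ∈ Finset.range N, coeffC2 a b b' c c' x m * y ^ m) := by
    simp only [F2]; ring
  have hyp1 : ‖y‖ ^ (a.re + (N : ℝ)) = ‖y‖ ^ a.re * ‖y‖ ^ (N : ℕ) := by
    rw [Real.rpow_add hyn, Real.rpow_natCast]
  have hyp2 : ‖y‖ ^ (b.re + (N : ℝ)) = ‖y‖ ^ b.re * ‖y‖ ^ (N : ℕ) := by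
    rw [Real.rpow_add hyn, Real.rpow_natCast]
  have hrp1 : (0:ℝ) ≤ ‖y‖ ^ (a.re + (N : ℝ)) := Real.rpow_nonneg (norm_nonneg y) _
  have hrp2 : (0:ℝ) ≤ ‖y‖ ^ (b.re + (N : ℝ)) := Real.rpow_nonneg (norm_nonneg y) _
  rw [hmain]
  calc ‖fgam c b a * (-(x / y)) ^ (-a) * _ + fgam c a b * (-(x / y)) ^ (-b) * _‖
      ≤ ‖fgam c b a‖ * ‖(-(x / y)) ^ (-a)‖ *
          ‖(∑' n : ℕ, F21 (-(n : ℂ)) b' c' y *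
            (poch a n * poch (1 - c + a) n /
              (poch (1 - b + a) n * (Nat.factorial n : ℂ))) * (x / y)⁻¹ ^ n) -
            ∑ m ∈ Finset.range N, coeffC1 a b b' c c' x m * y ^ m‖ +
        ‖fgam c a b‖ * ‖(-(x / y)) ^ (-b)‖ *
          ‖(∑' n : ℕ, F21 (a - b - n) b' c' y *
            (poch b n * poch (1 - c + b) n /
              (poch (1 - a + b) n * (Nat.factorial n : ℂ))) * (x / y)⁻¹ ^ n) -
            ∑ m ∈ Finset.range N, coeffC2 a b b' c c' x m * y ^ m‖ := by
        refine le_trans (norm_add_le _ _) ?_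
        rw [norm_mul, norm_mul, norm_mul, norm_mul]
    _ ≤ ‖fgam c b a‖ * ((‖x‖ ^ (-a.re) * Real.exp (Real.pi * |a.im|)) * ‖y‖ ^ a.re) *
          (C₁ * (2 * K₁) ^ N * 4 * ‖y‖ ^ N) +
        ‖fgam c a b‖ * ((‖x‖ ^ (-b.re) * Real.exp (Real.pi * |b.im|)) * ‖y‖ ^ b.re) *
          (C₂ * (2 * K₂) ^ N * 4 * ‖y‖ ^ N) := by
        gcongr <;> first
          | exact hcpow1 | exact key1 | exact hcpow2 | exact key2
    _ = D₁ * ‖y‖ ^ (a.re + (N : ℝ)) + D₂ * ‖y‖ ^ (b.re + (N : ℝ)) := by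
        rw [hyp1, hyp2, hD₁_def, hD₂_def]; ring
    _ ≤ max D₁ D₂ * ‖y‖ ^ (a.re + (N : ℝ)) + max D₁ D₂ * ‖y‖ ^ (b.re + (N : ℝ)) := by
        gcongr <;> first
          | exact le_max_left _ _ | exact le_max_right _ _
    _ = max D₁ D₂ * (‖y‖ ^ (a.re + (N : ℝ)) + ‖y‖ ^ (b.re + (N : ℝ))) := by ring
    _ = max D₁ D₂ * ‖‖y‖ ^ (a.re + (N : ℝ)) + ‖y‖ ^ (b.re + (N : ℝ))‖ := by
        rw [Real.norm_of_nonneg (by linarith)]
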